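/- Every commutative bilinear multiplication on ℝ² satisfying the Jordan identity (x∘x)∘(x∘y) = x∘((x∘x)∘y) with no nonzero isotropic vector (i.e. x∘x ≠ 0 for all x ≠ 0) admits a multiplicative identity element. -/

import Mathlib

lemma cubic_root_pos (a b c d : ℝ) (hc : 0 < c) : ∃ t : ℝ, c*t^3 + b*t^2 + a*t + d = 0 := by
  obtain ⟨M, hM⟩ : ∃ M : ℝ, M = (|a| + |b| + |d|)/c + 1 := ⟨_, rfl⟩
  have hM1 : 1 ≤ M := by
    have : 0 ≤ (|a| + |b| + |d|)/c := by positivity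
    linarith
  have hMc : |a| + |b| + |d| < c * M := by
    have h1 : c * M = (|a| + |b| + |d|) + c := by
      rw [hM]; field_simp
    linarith
  have hcont : Continuous fun t : ℝ => c*t^3 + b*t^2 + a*t + d := by continuity
  have hneg : c*(-M)^3 + b*(-M)^2 + a*(-M) + d ≤ 0 := by
    nlinarith [le_abs_self a, le_abs_self b, le_abs_self d, neg_abs_le a, neg_abs_le b, neg_abs_le d, sq_nonneg (M-1)]
  have hpos : 0 ≤ c*M^3 + b*M^2 + a*M + d := by
    nlinarith [le_abs_self a, le_abs_self b, le_abs_self d, neg_abs_le a, neg_abs_le b, neg_abs_le d, sq_nonneg (M-1)]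
  obtain ⟨t, _, ht⟩ := intermediate_value_Icc (by linarith : (-M:ℝ) ≤ M) hcont.continuousOn ⟨hneg, hpos⟩
  exact ⟨t, ht⟩

lemma cubic_root (a b c d : ℝ) (hc : c ≠ 0) : ∃ t : ℝ, c*t^3 + b*t^2 + a*t + d = 0 := by
  rcases hc.lt_or_gt with hneg | hpos
  · obtain ⟨t, ht⟩ := cubic_root_pos (-a) (-b) (-c) (-d) (by linarith)
    exact ⟨t, by linarith⟩
  · exact cubic_root_pos a b c d hpos

lemma collinear2 (v u : ℝ × ℝ) (hv : v ≠ 0) (h : v.1 * u.2 - v.2 * u.1 = 0) :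
    ∃ c : ℝ, u = c • v := by
  rcases Prod.ext_iff.not.mp hv with h1
  by_cases h1 : v.1 ≠ 0
  · refine ⟨u.1 / v.1, ?_⟩
    have : u.2 = u.1 / v.1 * v.2 := by field_simp; linarith
    ext <;> simp [this] <;> field_simp
  · push_neg at h1
    have h2 : v.2 ≠ 0 := by
      intro h2; exact hv (by ext <;> simp [h1, h2])
    refine ⟨u.2 / v.2, ?_⟩
    have : u.1 = u.2 / v.2 * v.1 := by field_simp; rw [h1] at h ⊢; nlinarith [h]
    ext <;> simp [this] <;> field_simp

lemma span2 (e w : ℝ × ℝ) (hdet : e.1*w.2 - e.2*w.1 ≠ 0) (x : ℝ × ℝ) :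
    ∃ a b : ℝ, x = a • e + b • w := by
  refine ⟨(x.1*w.2 - x.2*w.1)/(e.1*w.2 - e.2*w.1), (e.1*x.2 - e.2*x.1)/(e.1*w.2 - e.2*w.1), ?_⟩
  have hdet' : w.2 * e.1 - w.1 * e.2 ≠ 0 := by intro h; apply hdet; linarith
  ext <;> simp <;> field_simp <;> ring


def JordanLaw (φ : ℝ × ℝ → ℝ × ℝ → ℝ × ℝ) : Prop :=
  ∀ x y, φ (φ x x) (φ x y) = φ x (φ (φ x x) y)

def BilinLaw (φ : ℝ × ℝ → ℝ × ℝ → ℝ × ℝ) : Prop :=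
  (∀ (a : ℝ) x y z, φ (a • x + y) z = a • φ x z + φ y z) ∧
  (∀ (a : ℝ) x y z, φ x (a • y + z) = a • φ x y + φ x z)

def SymmLaw (φ : ℝ × ℝ → ℝ × ℝ → ℝ × ℝ) : Prop := ∀ x y, φ x y = φ y x

theorem stmt_0 (φ : ℝ × ℝ → ℝ × ℝ → ℝ × ℝ)
    (hb : BilinLaw φ) (hs : SymmLaw φ) (hj : JordanLaw φ)
    (hiso : ∀ x : ℝ × ℝ, x ≠ 0 → φ x x ≠ 0) :
    ∃ e : ℝ × ℝ, ∀ x, φ e x = x := by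
  obtain ⟨hbl, hbr⟩ := hb
  -- basic bilinearity consequences
  have h0l : ∀ z, φ 0 z = 0 := by
    intro z
    have := hbl 1 0 0 z
    simp at this
    linear_combination (norm := module) this
  have haddl : ∀ x y z, φ (x + y) z = φ x z + φ y z := by
    intro x y z; have := hbl 1 x y z; simpa using this
  have hsmull : ∀ (a : ℝ) x z, φ (a • x) z = a • φ x z := by
    intro a x z; have := hbl a x 0 z; simp [h0l] at this; simpa using this
  have h0r : ∀ z, φ z 0 = 0 := fun z => by rw [hs]; exact h0l z
  have haddr : ∀ x y z, φ z (x + y) = φ z x + φ z y := by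
    intro x y z; have := hbr 1 z x y; simpa using this
  have hsmulr : ∀ (a : ℝ) x z, φ z (a • x) = a • φ z x := by
    intro a x z; have := hbr a z x 0; simp [h0r] at this; simpa using this
  -- find a nonzero v with φ v v parallel to v
  obtain ⟨v, hv0, hcross⟩ : ∃ v : ℝ × ℝ, v ≠ 0 ∧ v.1 * (φ v v).2 - v.2 * (φ v v).1 = 0 := by
    obtain ⟨A, hA⟩ : ∃ A, A = φ ((1:ℝ),(0:ℝ)) ((1:ℝ),(0:ℝ)) := ⟨_, rfl⟩
    obtain ⟨B, hB⟩ : ∃ B, B = φ ((1:ℝ),(0:ℝ)) ((0:ℝ),(1:ℝ)) := ⟨_, rfl⟩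
    obtain ⟨C, hC⟩ : ∃ C, C = φ ((0:ℝ),(1:ℝ)) ((0:ℝ),(1:ℝ)) := ⟨_, rfl⟩
    have hrep : ∀ t : ℝ, φ (1,t) (1,t) = A + (2*t) • B + (t^2) • C := by
      intro t
      have hv : ((1:ℝ),t) = ((1:ℝ),(0:ℝ)) + t • ((0:ℝ),(1:ℝ)) := by
        ext <;> simp
      rw [hv, haddl, hsmull, haddr, haddr, hsmulr, hsmulr,
        hs ((0:ℝ),(1:ℝ)) ((1:ℝ),(0:ℝ)), ← hA, ← hB, ← hC]
      module
    by_cases hC1 : C.1 = 0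
    · refine ⟨((0:ℝ),(1:ℝ)), by simp [Prod.ext_iff], ?_⟩
      simp [← hC, hC1]
    · obtain ⟨t, ht⟩ := cubic_root (2*B.2 - A.1) (C.2 - 2*B.1) (-C.1) A.2 (by simpa using hC1)
      refine ⟨((1:ℝ), t), by simp [Prod.ext_iff], ?_⟩
      rw [hrep t]
      simp only [Prod.fst_add, Prod.snd_add, Prod.smul_fst, Prod.smul_snd, smul_eq_mul]
      nlinarith [ht]
  obtain ⟨lam, hlam⟩ := collinear2 v (φ v v) hv0 hcross
  have hlam0 : lam ≠ 0 := by
    intro h; exact hiso v hv0 (by simp [hlam, h])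
  obtain ⟨e, hedef⟩ : ∃ e : ℝ × ℝ, e = lam⁻¹ • v := ⟨_, rfl⟩
  have he : φ e e = e := by
    rw [hedef, hsmull, hsmulr, hlam, smul_smul, smul_smul]
    congr 1
    field_simp
  have he0 : e ≠ 0 := by
    rw [hedef]
    exact smul_ne_zero (inv_ne_zero hlam0) hv0
  have hsE : ∀ x, φ x e = φ e x := fun x => hs x e
  have hP1 : ∀ z, φ e z + (2:ℝ) • φ e (φ e (φ e z)) = (3:ℝ) • φ e (φ e z) := by
    intro z
    have key : ∀ t : ℝ,
        t • ((3:ℝ) • φ e (φ e z) - (2:ℝ) • φ e (φ e (φ e z)) - φ e z)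
        + (t^2) • ((2:ℝ) • φ (φ e z) (φ e z) + φ e (φ z z) - φ e (φ e (φ z z))
            - (2:ℝ) • φ z (φ e (φ e z)))
        + (t^3) • (φ (φ z z) (φ e z) - φ z (φ e (φ z z))) = 0 := by
      intro t
      have h := hj (e + t • z) e
      simp only [haddl, haddr, hsmull, hsmulr, he, smul_add, smul_smul, hsE] at h
      linear_combination (norm := module) h
    have k1 := key 1
    have k2 := key (-1)
    have k3 := key 2
    linear_combination (norm := module) (-1:ℝ) • k1 + (1/3:ℝ) • k2 + (1/6:ℝ) • k3
  by_cases hid : ∀ z, φ e z = z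
  · exact ⟨e, hid⟩
  push_neg at hid
  obtain ⟨z0, hz0⟩ := hid
  obtain ⟨a, hadef⟩ : ∃ a : ℝ × ℝ, a = φ e z0 - z0 := ⟨_, rfl⟩
  have ha0 : a ≠ 0 := by
    rw [hadef]; exact sub_ne_zero.mpr hz0
  have hsubr : ∀ x y z, φ x (y - z) = φ x y - φ x z := by
    intro x y z
    have hyz : y - z = (-1:ℝ) • z + y := by module
    rw [hyz, hbr]; module
  have e1 : φ e a = φ e (φ e z0) - φ e z0 := by rw [hadef, hsubr]
  have e2 : φ e (φ e a) = φ e (φ e (φ e z0)) - φ e (φ e z0) := by rw [e1, hsubr]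
  have ha2 : (2:ℝ) • φ e (φ e a) = φ e a := by
    linear_combination (norm := module) (2:ℝ) • e2 - e1 + hP1 z0
  by_cases hb0 : φ e a = 0
  -- Case A : eigenvector with eigenvalue 0
  · obtain ⟨w, hwdef⟩ : ∃ w : ℝ × ℝ, w = a := ⟨_, rfl⟩
    have hw0 : φ e w = 0 := by rw [hwdef]; exact hb0
    have hwne : w ≠ 0 := by rw [hwdef]; exact ha0
    have hindep : ∀ c : ℝ, w ≠ c • e := by
      intro c hc
      have : φ e w = c • e := by rw [hc, hsmulr, he]
      rw [hw0] at this
      have hc0 : c = 0 := by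
        rcases smul_eq_zero.mp this.symm with h | h
        · exact h
        · exact absurd h he0
      rw [hc0, zero_smul] at hc
      exact hwne hc
    have hdet : e.1 * w.2 - e.2 * w.1 ≠ 0 := by
      intro h
      obtain ⟨c, hc⟩ := collinear2 e w he0 h
      exact hindep c hc
    -- L (w²) = 0
    have key : ∀ t : ℝ,
        t • φ e (φ w w) - (t^2) • φ e (φ (φ w w) w)
        + (t^3) • (φ (φ w w) (φ w w) - φ w (φ (φ w w) w)) = 0 := by
      intro t
      have h := hj (e + t • w) w
      simp only [haddl, haddr, hsmull, hsmulr, he, smul_add, smul_smul, hsE, hw0, h0l, h0r] at h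
      linear_combination (norm := module) h
    have k1 := key 1
    have k2 := key (-1)
    have k3 := key 2
    have hLw2 : φ e (φ w w) = 0 := by
      linear_combination (norm := module) k1 - (1/3:ℝ) • k2 - (1/6:ℝ) • k3
    obtain ⟨α, β, hab⟩ := span2 e w hdet (φ w w)
    have h1 : φ e (φ w w) = α • e := by
      rw [hab, hbr α e e (β • w), he, hsmulr, hw0]
      module
    have hα : α = 0 := by
      rw [hLw2] at h1
      rcases smul_eq_zero.mp h1.symm with h | h
      · exact h
      · exact absurd h he0
    have hβ : β ≠ 0 := by
      intro h
      exact hiso w hwne (by rw [hab, hα, h]; module)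
    -- identity element is e + β⁻¹ • w
    refine ⟨e + β⁻¹ • w, ?_⟩
    intro x
    have hEe : φ (e + β⁻¹ • w) e = e := by
      rw [haddl, he, hsmull, hsE, hw0]
      module
    have hEw : φ (e + β⁻¹ • w) w = w := by
      rw [haddl, hw0, hsmull, hab, hα]
      simp [smul_smul, inv_mul_cancel₀ hβ]
    obtain ⟨p, q, hx⟩ := span2 e w hdet x
    rw [hx, haddr, hsmulr, hsmulr, hEe, hEw]
  -- Case B : eigenvector with eigenvalue 1/2
  · obtain ⟨w, hwdef⟩ : ∃ w : ℝ × ℝ, w = φ e a := ⟨_, rfl⟩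
    have hwne : w ≠ 0 := by rw [hwdef]; exact hb0
    have hw12 : φ e w = (1/2 : ℝ) • w := by
      rw [hwdef]
      linear_combination (norm := module) (1/2:ℝ) • ha2
    have hindep : ∀ c : ℝ, w ≠ c • e := by
      intro c hc
      have h1 : φ e w = c • e := by rw [hc, hsmulr, he]
      rw [hw12, hc] at h1
      have h2 : ((1:ℝ)/2 * c - c) • e = 0 := by
        rw [sub_smul, mul_smul]
        rw [h1]
        module
      have hc0 : c = 0 := by
        rcases smul_eq_zero.mp h2 with h | h
        · linarith
        · exact absurd h he0
      rw [hc0, zero_smul] at hc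
      exact hwne hc
    have hdet : e.1 * w.2 - e.2 * w.1 ≠ 0 := by
      intro h
      obtain ⟨c, hc⟩ := collinear2 e w he0 h
      exact hindep c hc
    obtain ⟨α, β, hab⟩ := span2 e w hdet (φ w w)
    have key : ∀ t : ℝ,
        (t^2) • ((1/2:ℝ) • φ (φ w w) w - φ e (φ (φ w w) w))
        + (t^3) • (φ (φ w w) (φ w w) - φ w (φ (φ w w) w)) = 0 := by
      intro t
      have h := hj (e + t • w) w
      simp only [haddl, haddr, hsmull, hsmulr, he, smul_add, smul_smul, hsE, hw12,
        h0l, h0r] at h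
      linear_combination (norm := module) h
    have hc2 : (2:ℝ) • φ e (φ (φ w w) w) = φ (φ w w) w := by
      have k1 := key 1
      have k2 := key (-1)
      linear_combination (norm := module) (-1:ℝ) • k1 - k2
    have hA1 : φ (φ w w) w = (α*β) • e + (α/2 + β^2) • w := by
      rw [hab, hbl α e (β • w) w, hsmull, hw12, hab]
      module
    have hA2 : φ e (φ (φ w w) w) = (α*β) • e + ((α/2 + β^2)/2) • w := by
      rw [hA1, hbr (α*β) e e ((α/2 + β^2) • w), he, hsmulr, hw12]
      module
    have habe : (α*β) • e = 0 := by
      linear_combination (norm := module) hc2 - (2:ℝ) • hA2 + hA1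
    have hαβ : α * β = 0 := (smul_eq_zero.mp habe).resolve_right he0
    by_cases hβ : β = 0
    · -- subcase w² = α • e with α ≠ 0 : contradiction with Jordan at (e+w, w)
      have hab' : φ w w = α • e := by rw [hab, hβ]; module
      have hα0 : α ≠ 0 := by
        intro h
        exact hiso w hwne (by rw [hab', h]; module)
      exfalso
      have h := hj (e + w) w
      simp only [haddl, haddr, hsmull, hsmulr, he, hsE, smul_add, smul_smul, hw12,
        hab', h0l, h0r] at h
      have hk : ((α^2)/2) • e = 0 := by
        linear_combination (norm := module) h
      rcases smul_eq_zero.mp hk with h' | h'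
      · exact hα0 (by nlinarith [h'])
      · exact he0 h'
    · -- subcase w² = β • w : contradiction with Jordan at (u+e, e) where u = β⁻¹ • w
      have hα : α = 0 := (mul_eq_zero.mp hαβ).resolve_right hβ
      have hab' : φ w w = β • w := by rw [hab, hα]; module
      obtain ⟨u, hu⟩ : ∃ u : ℝ × ℝ, u = β⁻¹ • w := ⟨_, rfl⟩
      have huw : w = β • u := by
        rw [hu, smul_smul, mul_inv_cancel₀ hβ, one_smul]
      have huu : φ u u = u := by
        rw [hu, hsmull, hsmulr, hab', smul_smul, smul_smul]
        congr 1
        field_simp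
      have hue : φ e u = (1/2:ℝ) • u := by
        rw [hu, hsmulr, hw12]
        module
      exfalso
      have h := hj (u + e) e
      simp only [haddl, haddr, hsmull, hsmulr, he, hsE, smul_add, smul_smul, huu,
        hue, h0l, h0r] at h
      have hk : ((1:ℝ)/4) • u = 0 := by
        linear_combination (norm := module) h
      have hu0 : u = 0 := by
        rcases smul_eq_zero.mp hk with h' | h'
        · norm_num at h'
        · exact h'
      exact hwne (by rw [huw, hu0, smul_zero])
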